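/- Let t > 0, k ∈ ℝ, k ≠ 0, n ∈ ℤ, and set λₙ = 2kt/((2n−1)π). Define e₁(s) = cos(2ks/λₙ), e₂(s) = sin(2ks/λₙ) on [0,t). Then with M = k(A* − A) as above, M e₂ = λₙ e₁ and −M e₁ = λₙ e₂, i.e. (e₁,e₂) is an eigenvector of the block operator T(f₁,f₂)=(Mf₂,−Mf₁) with eigenvalue λₙ. -/

import Mathlib

open Real MeasureTheory

/-- With `λₙ = 2kt/((2n-1)π)`, the pair `(cos(2k·/λₙ), sin(2k·/λₙ))` is an eigenvector
with eigenvalue `λₙ` of the block operator `T(f₁,f₂) = (M f₂, -M f₁)`,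
where `(Mf)(s) = k(∫_s^t f - ∫_0^s f)`. -/
theorem stmt_3 (t k : ℝ) (ht : 0 < t) (hk : k ≠ 0) (n : ℤ)
    (lam : ℝ) (hlam : lam = 2*k*t/((2*(n:ℝ) - 1)*π)) :
    ∀ s ∈ Set.Ico (0:ℝ) t,
      (k * ((∫ τ in s..t, Real.sin (2*k*τ/lam)) - ∫ τ in (0:ℝ)..s, Real.sin (2*k*τ/lam))
        = lam * Real.cos (2*k*s/lam)) ∧
      (-(k * ((∫ τ in s..t, Real.cos (2*k*τ/lam)) - ∫ τ in (0:ℝ)..s, Real.cos (2*k*τ/lam)))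
        = lam * Real.sin (2*k*s/lam)) := by
  have h2n : (2*(n:ℝ) - 1) ≠ 0 := by
    intro h
    have h2 : ((2*n - 1 : ℤ) : ℝ) = 0 := by push_cast; linarith
    have : (2*n - 1 : ℤ) = 0 := by exact_mod_cast h2
    omega
  have hlam0 : lam ≠ 0 := by
    rw [hlam]
    exact div_ne_zero (by positivity) (mul_ne_zero h2n pi_ne_zero)
  set c := 2*k/lam with hc
  have hc0 : c ≠ 0 := div_ne_zero (by positivity) hlam0
  have hct : c * t = (2*(n:ℝ)-1)*π := by
    rw [hc, hlam]
    field_simp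
  have hcos : Real.cos (c*t) = -1 := by
    rw [hct]
    have h : (2*(n:ℝ)-1)*π = -π + (n:ℤ)*(2*π) := by push_cast; ring
    rw [h, Real.cos_add_int_mul_two_pi, Real.cos_neg, Real.cos_pi]
  have hsin : Real.sin (c*t) = 0 := by
    rw [hct]
    have h : (2*(n:ℝ)-1)*π = ((2*n-1 : ℤ):ℝ)*π := by push_cast; ring
    rw [h, Real.sin_int_mul_pi]
  intro s hs
  have harg : ∀ τ : ℝ, 2*k*τ/lam = c*τ := fun τ => by rw [hc]; ring
  have hIs : ∀ a b : ℝ, (∫ τ in a..b, Real.sin (2*k*τ/lam))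
      = (Real.cos (c*a) - Real.cos (c*b))/c := by
    intro a b
    simp_rw [harg]
    rw [intervalIntegral.integral_comp_mul_left (fun x => Real.sin x) hc0,
      integral_sin, smul_eq_mul]
    ring
  have hIc : ∀ a b : ℝ, (∫ τ in a..b, Real.cos (2*k*τ/lam))
      = (Real.sin (c*b) - Real.sin (c*a))/c := by
    intro a b
    simp_rw [harg]
    rw [intervalIntegral.integral_comp_mul_left (fun x => Real.cos x) hc0,
      integral_cos, smul_eq_mul]
    ring
  have hkc : 2*k = lam * c := by rw [hc]; field_simp
  constructor
  · rw [hIs, hIs, harg]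
    rw [hcos]
    simp only [mul_zero, Real.cos_zero]
    field_simp
    linear_combination Real.cos (c*s) * hkc
  · rw [hIc, hIc, harg]
    rw [hsin]
    simp only [mul_zero, Real.sin_zero]
    field_simp
    linear_combination c * Real.sin (c*s) * hkc + (4*k^2*Real.sin (c*s)*lam⁻¹ - 2*k*Real.sin (c*s)) * mul_inv_cancel₀ hlam0
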